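/- The Lobachevsky function attains its global maximum over all of ℝ at θ = π/6: for every real θ, Λ(θ) ≤ Λ(π/6). -/

import Mathlib

open MeasureTheory Real

/-- The Lobachevsky function `Λ(θ) = -∫₀^θ log |2 sin t| dt`. -/
noncomputable def lobachevsky (θ : ℝ) : ℝ :=
  -∫ t in (0:ℝ)..θ, Real.log |2 * Real.sin t|

open Set intervalIntegral Filter Topology Interval


lemma integrableOn_log_Ioc_one : IntegrableOn Real.log (Ioc (0:ℝ) 1) := by
  have ha : Tendsto (fun n : ℕ => (1:ℝ) / (n + 1)) atTop (𝓝 0) :=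
    tendsto_one_div_add_atTop_nhds_zero_nat
  have hpos : ∀ n : ℕ, (0:ℝ) < 1 / (n + 1) := by
    intro n; positivity
  have hle : ∀ n : ℕ, (1:ℝ) / (n + 1) ≤ 1 := by
    intro n
    rw [div_le_one (by positivity)]
    linarith [Nat.cast_nonneg (α := ℝ) n]
  have hnm : ∀ n : ℕ, (0:ℝ) ∉ [[1 / ((n:ℝ)+1), (1:ℝ)]] := by
    intro n
    rw [uIcc_of_le (hle n)]
    exact fun hm => absurd hm.1 (not_le.2 (hpos n))
  refine integrableOn_Ioc_of_intervalIntegral_norm_bounded_left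
    (f := Real.log) (I := 1) (a := fun n : ℕ => 1 / (n+1)) (b := 1) ?_ ha ?_
  · exact fun n => (intervalIntegrable_log (hnm n)).1
  · filter_upwards with n
    have h0 := hpos n
    have h1 := hle n
    set a := (1:ℝ)/(n+1) with ha'
    have : ∫ x in Ioc a 1, ‖Real.log x‖ = ∫ x in Ioc a 1, -Real.log x := by
      refine setIntegral_congr_fun measurableSet_Ioc (fun x hx => ?_)
      rw [Real.norm_eq_abs, abs_of_nonpos (Real.log_nonpos (h0.trans hx.1).le hx.2)]
    rw [this, MeasureTheory.integral_neg, ← intervalIntegral.integral_of_le h1,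
      integral_log]
    have hl : a * Real.log a ≤ 0 :=
      mul_nonpos_of_nonneg_of_nonpos h0.le (Real.log_nonpos h0.le h1)
    simp only [Real.log_one]
    nlinarith

lemma integrableOn_log_Ioc (b : ℝ) : IntegrableOn Real.log (Ioc (0:ℝ) b) := by
  rcases le_or_gt b 1 with hb | hb
  · exact integrableOn_log_Ioc_one.mono_set (Ioc_subset_Ioc_right hb)
  · have h2 : IntegrableOn Real.log (Ioc (1:ℝ) b) :=
      (intervalIntegrable_log (by
        rw [uIcc_of_le hb.le]
        exact fun hm => absurd hm.1 (not_le.2 one_pos)) : IntervalIntegrable _ volume 1 b).1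
    exact (integrableOn_log_Ioc_one.union h2).mono_set
      (by rw [Ioc_union_Ioc_eq_Ioc zero_le_one hb.le])



noncomputable def F (t : ℝ) : ℝ := Real.log |2 * Real.sin t|

lemma F_meas : Measurable F :=
  Real.measurable_log.comp ((continuous_abs.comp (continuous_const.mul Real.continuous_sin)).measurable)

lemma F_pi_sub (x : ℝ) : F (Real.pi - x) = F x := by
  simp [F, Real.sin_pi_sub]

lemma F_periodic : Function.Periodic F Real.pi := by
  intro x
  simp [F, Real.sin_add_pi, abs_of_nonneg, mul_neg, abs_neg]

lemma F_intStep : IntervalIntegrable F volume 0 (Real.pi/2) := by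
  rw [intervalIntegrable_iff_integrableOn_Ioc_of_le (by positivity)]
  have hg : IntegrableOn (fun t => ‖Real.log t‖ + Real.log 2) (Ioc (0:ℝ) (Real.pi/2)) := by
    refine ((integrableOn_log_Ioc (Real.pi/2)).norm).add (integrableOn_const ?_)
    exact measure_Ioc_lt_top.ne
  refine Integrable.mono hg (F_meas.aestronglyMeasurable.restrict) ?_
  rw [ae_restrict_iff' measurableSet_Ioc]
  filter_upwards with t ht
  have h0 : 0 < t := ht.1
  have h2 : t ≤ Real.pi / 2 := ht.2
  have hs0 : 0 < Real.sin t := Real.sin_pos_of_pos_of_lt_pi h0 (lt_of_le_of_lt h2 (by linarith [Real.pi_pos]))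
  have habs : |2 * Real.sin t| = 2 * Real.sin t := abs_of_pos (by linarith)
  have hub : F t ≤ Real.log 2 := by
    rw [F, habs]
    have : 2 * Real.sin t ≤ 2 := by linarith [Real.sin_le_one t]
    exact Real.log_le_log (by linarith) this
  have hlb : Real.log t ≤ F t := by
    rw [F, habs]
    refine Real.log_le_log h0 ?_
    have hj := Real.mul_le_sin h0.le h2
    have hπ := Real.pi_pos
    rw [div_mul_eq_mul_div, div_le_iff₀ hπ] at hj
    have h315 := mul_le_mul_of_nonneg_right Real.pi_lt_d2.le hs0.le
    linarith
  have hlog2 : (0:ℝ) ≤ Real.log 2 := Real.log_nonneg one_le_two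
  simp only [Real.norm_eq_abs]
  rw [abs_of_nonneg (add_nonneg (abs_nonneg _) hlog2), abs_le]
  constructor
  · have := neg_abs_le (Real.log t); linarith
  · have := abs_nonneg (Real.log t); linarith

lemma F_int_zero_pi : IntervalIntegrable F volume 0 Real.pi := by
  have h2 : IntervalIntegrable F volume (Real.pi/2) Real.pi := by
    have h := (F_intStep.comp_sub_left Real.pi).symm
    simp only [sub_zero, F_pi_sub] at h
    have he : Real.pi - Real.pi/2 = Real.pi/2 := by ring
    rw [he] at h
    exact h
  exact F_intStep.trans h2



lemma F_int_cell (n : ℤ) : IntervalIntegrable F volume (n * Real.pi) ((n+1) * Real.pi) := by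
  have h := F_int_zero_pi.comp_sub_right (n * Real.pi)
  have he : (fun x => F (x - n * Real.pi)) = F := funext fun x => F_periodic.sub_int_mul_eq n
  rw [he] at h
  simpa [zero_add, add_mul, one_mul, add_comm] using h

lemma F_int_cells : ∀ m n : ℤ, m ≤ n → IntervalIntegrable F volume (m * Real.pi) (n * Real.pi) := by
  intro m n hmn
  refine Int.le_induction (motive := fun k _ => IntervalIntegrable F volume (m * Real.pi) (k * Real.pi)) ?_ ?_ n hmn
  · exact IntervalIntegrable.refl
  · intro n _ ih
    exact ih.trans (by simpa [add_mul] using F_int_cell n)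

lemma F_int (a b : ℝ) : IntervalIntegrable F volume a b := by
  have hπ := Real.pi_pos
  set m : ℤ := ⌊min a b / Real.pi⌋ with hm
  set n : ℤ := ⌈max a b / Real.pi⌉ with hn
  have hmn : m ≤ n := by
    have : (m:ℝ) ≤ n := by
      calc (m:ℝ) ≤ min a b / Real.pi := Int.floor_le _
        _ ≤ max a b / Real.pi := by gcongr; exact min_le_max
        _ ≤ n := Int.le_ceil _
    exact_mod_cast this
  have hma : (m:ℝ) * Real.pi ≤ min a b := by
    rw [← le_div_iff₀ hπ]; exact Int.floor_le _
  have hnb : max a b ≤ (n:ℝ) * Real.pi := by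
    rw [← div_le_iff₀ hπ]; exact Int.le_ceil _
  refine (F_int_cells m n hmn).mono_set ?_
  rw [uIcc_of_le (by nlinarith [min_le_max (a := a) (b := b)] : (m:ℝ) * Real.pi ≤ n * Real.pi)]
  refine uIcc_subset_Icc ⟨?_, ?_⟩ ⟨?_, ?_⟩
  · exact hma.trans (min_le_left a b)
  · exact (le_max_left a b).trans hnb
  · exact hma.trans (min_le_right a b)
  · exact (le_max_right a b).trans hnb

lemma F_half_eq : ∫ t in (Real.pi/2)..Real.pi, F t = ∫ t in (0:ℝ)..(Real.pi/2), F t := by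
  have h := intervalIntegral.integral_comp_sub_left (a := (0:ℝ)) (b := Real.pi/2) F Real.pi
  simp only [F_pi_sub, sub_zero] at h
  rw [show Real.pi - Real.pi/2 = Real.pi/2 by ring] at h
  exact h.symm

lemma F_cos_eq : ∫ t in (0:ℝ)..(Real.pi/2), Real.log |2 * Real.cos t| = ∫ t in (0:ℝ)..(Real.pi/2), F t := by
  have h := intervalIntegral.integral_comp_sub_left (a := (0:ℝ)) (b := Real.pi/2) F (Real.pi/2)
  simp only [sub_zero, sub_self] at h
  rw [← h]
  refine intervalIntegral.integral_congr (fun x _ => ?_)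
  simp [F, Real.sin_pi_div_two_sub]

lemma F_integral_zero : ∫ t in (0:ℝ)..Real.pi, F t = 0 := by
  have hπ := Real.pi_pos
  set I := ∫ t in (0:ℝ)..(Real.pi/2), F t with hI
  have hJ : ∫ t in (0:ℝ)..Real.pi, F t = 2 * I := by
    rw [← intervalIntegral.integral_add_adjacent_intervals
      (F_int 0 (Real.pi/2)) (F_int (Real.pi/2) Real.pi), F_half_eq]
    ring
  -- substitution t = 2x
  have hsub : ∫ x in (0:ℝ)..(Real.pi/2), F (2 * x) = 2⁻¹ * ∫ t in (0:ℝ)..Real.pi, F t := by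
    have h := intervalIntegral.integral_comp_mul_left (a := (0:ℝ)) (b := Real.pi/2) F (c := 2) two_ne_zero
    rw [h, smul_eq_mul, show (2:ℝ) * 0 = 0 by ring, show (2:ℝ) * (Real.pi/2) = Real.pi by ring]
  -- F (2x) = F x + log|2 cos x| a.e.
  have hcos_int : IntervalIntegrable (fun t => Real.log |2 * Real.cos t|) volume 0 (Real.pi/2) := by
    have h := (F_int 0 (Real.pi/2)).comp_sub_left (Real.pi/2)
    simp only [sub_zero, sub_self] at h
    have he : (fun x => F (Real.pi/2 - x)) = fun t => Real.log |2 * Real.cos t| := by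
      funext x; simp [F, Real.sin_pi_div_two_sub]
    rw [he] at h
    exact h.symm
  have hae : ∫ x in (0:ℝ)..(Real.pi/2), F (2 * x)
      = ∫ x in (0:ℝ)..(Real.pi/2), (F x + Real.log |2 * Real.cos x|) := by
    refine intervalIntegral.integral_congr_ae ?_
    have hne : ∀ᵐ x : ℝ, x ≠ Real.pi/2 := by
      refine ae_iff.2 ?_
      simp [Real.volume_singleton]
    filter_upwards [hne] with x hx hmem
    rw [uIoc_of_le (by positivity)] at hmem
    have h0 : 0 < x := hmem.1
    have h2 : x < Real.pi/2 := lt_of_le_of_ne hmem.2 hx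
    have hs : Real.sin x ≠ 0 := (Real.sin_pos_of_pos_of_lt_pi h0 (by linarith)).ne'
    have hc : Real.cos x ≠ 0 := (Real.cos_pos_of_mem_Ioo ⟨by linarith, h2⟩).ne'
    have : (2:ℝ) * Real.sin (2 * x) = (2 * Real.sin x) * (2 * Real.cos x) := by
      rw [Real.sin_two_mul]; ring
    rw [F, F, this, abs_mul, Real.log_mul (by simp [hs]) (by simp [hc])]
  have hsplit : ∫ x in (0:ℝ)..(Real.pi/2), (F x + Real.log |2 * Real.cos x|) = I + I := by
    rw [intervalIntegral.integral_add (F_int 0 (Real.pi/2)) hcos_int, F_cos_eq]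
  have := hsub
  rw [hae, hsplit] at this
  have hJ' := hJ
  -- I + I = 2⁻¹ * (2 I) = I ... need: from this: 2I = 2⁻¹ * J and hJ : J = 2I
  rw [hJ] at this
  -- this : I + I = 2⁻¹ * (2 * I)  → I + I = I → I = 0
  rw [hJ]
  linarith





lemma lob_eq (θ : ℝ) : lobachevsky θ = -∫ t in (0:ℝ)..θ, F t := rfl

lemma lob_periodic : Function.Periodic lobachevsky Real.pi := by
  intro θ
  rw [lob_eq, lob_eq, ← intervalIntegral.integral_add_adjacent_intervals (F_int 0 θ) (F_int θ (θ + Real.pi)),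
    F_periodic.intervalIntegral_add_eq θ 0, zero_add, F_integral_zero, add_zero]

lemma F_nonpos_small : ∀ t ∈ Icc (0:ℝ) (Real.pi/6), F t ≤ 0 := by
  intro t ht
  have hπ := Real.pi_pos
  have hs : Real.sin t ≤ 1/2 := by
    rw [← Real.sin_pi_div_six]
    have h1 : t ∈ Icc (-(Real.pi/2)) (Real.pi/2) := ⟨by linarith [ht.1], by linarith [ht.2]⟩
    have h2 : Real.pi/6 ∈ Icc (-(Real.pi/2)) (Real.pi/2) := ⟨by linarith, by linarith⟩
    exact Real.strictMonoOn_sin.monotoneOn h1 h2 ht.2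
  have hs0 : 0 ≤ Real.sin t := Real.sin_nonneg_of_nonneg_of_le_pi ht.1 (by linarith [ht.2])
  have : |2 * Real.sin t| ≤ 1 := by rw [abs_of_nonneg (by linarith)]; linarith
  exact Real.log_nonpos (abs_nonneg _) this

lemma F_nonneg_mid : ∀ t ∈ Icc (Real.pi/6) (5*Real.pi/6), 0 ≤ F t := by
  intro t ht
  have hπ := Real.pi_pos
  have hs : 1/2 ≤ Real.sin t := by
    rcases le_or_gt t (Real.pi/2) with h | h
    · rw [← Real.sin_pi_div_six]
      exact Real.strictMonoOn_sin.monotoneOn ⟨by linarith, by linarith⟩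
        ⟨by linarith [ht.1], h⟩ ht.1
    · rw [← Real.sin_pi_sub, ← Real.sin_pi_div_six]
      exact Real.strictMonoOn_sin.monotoneOn ⟨by linarith, by linarith⟩
        ⟨by linarith [ht.2], by linarith⟩ (by linarith [ht.2])
  have : (1:ℝ) ≤ |2 * Real.sin t| := by
    rw [abs_of_nonneg (by linarith)]; linarith
  exact Real.log_nonneg this

lemma F_nonpos_big : ∀ t ∈ Icc (5*Real.pi/6) Real.pi, F t ≤ 0 := by
  intro t ht
  have hπ := Real.pi_pos
  have h' : Real.pi - t ∈ Icc (0:ℝ) (Real.pi/6) := ⟨by linarith [ht.2], by linarith [ht.1]⟩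
  have := F_nonpos_small _ h'
  simpa [F, Real.sin_pi_sub] using this

lemma F_int_nonpos {a b : ℝ} (hab : a ≤ b) (h : ∀ u ∈ Icc a b, F u ≤ 0) :
    ∫ t in a..b, F t ≤ 0 := by
  have := intervalIntegral.integral_nonneg (f := fun t => -F t) (μ := volume) hab
    (fun u hu => neg_nonneg.2 (h u hu))
  rw [intervalIntegral.integral_neg] at this
  linarith

lemma key_interval (θ : ℝ) (hθ : θ ∈ Icc (0:ℝ) Real.pi) :
    lobachevsky θ ≤ lobachevsky (Real.pi/6) := by
  have hπ := Real.pi_pos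
  have hgoal : 0 ≤ ∫ t in (Real.pi/6)..θ, F t → lobachevsky θ ≤ lobachevsky (Real.pi/6) := by
    intro h
    rw [lob_eq, lob_eq]
    have := intervalIntegral.integral_add_adjacent_intervals (F_int 0 (Real.pi/6)) (F_int (Real.pi/6) θ)
    linarith [this]
  apply hgoal
  rcases le_or_gt θ (Real.pi/6) with h1 | h1
  · rw [intervalIntegral.integral_symm θ (Real.pi/6)]
    have : ∫ t in θ..(Real.pi/6), F t ≤ 0 :=
      F_int_nonpos h1 (fun u hu => F_nonpos_small u ⟨hθ.1.trans hu.1, hu.2⟩)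
    linarith
  rcases le_or_gt θ (5*Real.pi/6) with h2 | h2
  · exact intervalIntegral.integral_nonneg h1.le
      (fun u hu => F_nonneg_mid u ⟨hu.1, hu.2.trans h2⟩)
  · have hsplit := intervalIntegral.integral_add_adjacent_intervals
      (F_int (Real.pi/6) θ) (F_int θ Real.pi)
    have htail : ∫ t in θ..Real.pi, F t ≤ 0 :=
      F_int_nonpos hθ.2 (fun u hu => F_nonpos_big u ⟨h2.le.trans hu.1, hu.2⟩)
    have hfull : 0 ≤ ∫ t in (Real.pi/6)..Real.pi, F t := by
      have hsplit2 := intervalIntegral.integral_add_adjacent_intervals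
        (F_int 0 (Real.pi/6)) (F_int (Real.pi/6) Real.pi)
      rw [F_integral_zero] at hsplit2
      have hhead : ∫ t in (0:ℝ)..(Real.pi/6), F t ≤ 0 :=
        F_int_nonpos (by linarith) F_nonpos_small
      linarith
    linarith

/-- Λ attains its global maximum over ℝ at θ = π/6. -/
theorem lobachevsky_le_lobachevsky_pi_div_six (θ : ℝ) :
    lobachevsky θ ≤ lobachevsky (Real.pi / 6) := by
  have hπ := Real.pi_pos
  set k : ℤ := ⌊θ / Real.pi⌋ with hk
  have h1 : 0 ≤ θ - k * Real.pi := Int.sub_floor_div_mul_nonneg θ hπ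
  have h2 : θ - k * Real.pi < Real.pi := Int.sub_floor_div_mul_lt θ hπ
  have hper : lobachevsky (θ - k * Real.pi) = lobachevsky θ :=
    lob_periodic.sub_int_mul_eq k
  rw [← hper]
  exact key_interval _ ⟨h1, h2.le⟩
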